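/- Let n ≥ 2, m_i > 0, r > 0, A > 0, let g : (0,∞) → ℝ be differentiable with g > 0 and g' < 0 on (0,∞), and let angles 0 ≤ α₁ < ... < α_n < 2π be given. For any ρ ∈ ℝ and γ ∈ ℝⁿ define Q(ρ, γ) = -2ρ²·A²·∑_i m_i + ∑_{i≠j} m_i m_j (2ρ·sin((α_i-α_j)/2) + r(γ_i-γ_j)·cos((α_i-α_j)/2))²·g'(2r·sin(|α_i-α_j|/2)) - ∑_{i≠j} m_i m_j (γ_i-γ_j)²·r·sin(|α_i-α_j|/2)·g(2r·sin(|α_i-α_j|/2)). Then Q(ρ, γ) ≤ 0, with equality if and only if ρ = 0 and all γ_i are equal. -/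

import Mathlib

open Finset in
theorem hessian_quadratic_form_nonpos (n : ℕ) (hn : 2 ≤ n)
    (m : Fin n → ℝ) (hm : ∀ i, 0 < m i) (r A : ℝ) (hr : 0 < r) (hA : 0 < A)
    (g g' : ℝ → ℝ) (hderiv : ∀ x : ℝ, 0 < x → HasDerivAt g (g' x) x)
    (hgpos : ∀ x : ℝ, 0 < x → 0 < g x) (hg'neg : ∀ x : ℝ, 0 < x → g' x < 0)
    (α : Fin n → ℝ) (hα0 : ∀ i, 0 ≤ α i) (hα2π : ∀ i, α i < 2 * Real.pi)
    (hmono : StrictMono α)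
    (Q : ℝ → (Fin n → ℝ) → ℝ)
    (hQ : ∀ (ρ : ℝ) (γ : Fin n → ℝ), Q ρ γ =
      -2 * ρ ^ 2 * A ^ 2 * ∑ i, m i
      + ∑ i, ∑ j ∈ univ.erase i, m i * m j *
          (2 * ρ * Real.sin ((α i - α j) / 2)
            + r * (γ i - γ j) * Real.cos ((α i - α j) / 2)) ^ 2 *
          g' (2 * r * Real.sin (|α i - α j| / 2))
      - ∑ i, ∑ j ∈ univ.erase i, m i * m j * (γ i - γ j) ^ 2 * r *
          Real.sin (|α i - α j| / 2) * g (2 * r * Real.sin (|α i - α j| / 2))) :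
    ∀ (ρ : ℝ) (γ : Fin n → ℝ),
      Q ρ γ ≤ 0 ∧ (Q ρ γ = 0 ↔ ρ = 0 ∧ ∀ i j, γ i = γ j) := by
  have hne : Nonempty (Fin n) := ⟨⟨0, by omega⟩⟩
  have hS : 0 < ∑ i, m i := Finset.sum_pos (fun i _ => hm i) univ_nonempty
  have hsin : ∀ i j : Fin n, i ≠ j → 0 < Real.sin (|α i - α j| / 2) := by
    intro i j hij
    apply Real.sin_pos_of_pos_of_lt_pi
    · have hne' : α i ≠ α j := fun h => hij (hmono.injective h)
      have := abs_pos.mpr (sub_ne_zero.mpr hne')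
      linarith
    · have h1 := hα0 i; have h2 := hα0 j
      have h3 := hα2π i; have h4 := hα2π j
      have : |α i - α j| < 2 * Real.pi :=
        abs_sub_lt_iff.mpr ⟨by linarith, by linarith⟩
      linarith
  intro ρ γ
  set T2 := ∑ i, ∑ j ∈ univ.erase i, m i * m j *
          (2 * ρ * Real.sin ((α i - α j) / 2)
            + r * (γ i - γ j) * Real.cos ((α i - α j) / 2)) ^ 2 *
          g' (2 * r * Real.sin (|α i - α j| / 2)) with hT2def
  set T3 := ∑ i, ∑ j ∈ univ.erase i, m i * m j * (γ i - γ j) ^ 2 * r *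
          Real.sin (|α i - α j| / 2) * g (2 * r * Real.sin (|α i - α j| / 2)) with hT3def
  have hT1 : -2 * ρ ^ 2 * A ^ 2 * ∑ i, m i ≤ 0 := by
    have h : 0 ≤ 2 * ρ ^ 2 * A ^ 2 * ∑ i, m i := by positivity
    linarith
  have hT2 : T2 ≤ 0 := by
    apply Finset.sum_nonpos
    intro i _
    apply Finset.sum_nonpos
    intro j hj
    have hij : j ≠ i := Finset.ne_of_mem_erase hj
    have harg : 0 < 2 * r * Real.sin (|α i - α j| / 2) := by
      have := hsin i j (Ne.symm hij)
      nlinarith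
    have hg' := hg'neg _ harg
    have hmm : 0 < m i * m j := mul_pos (hm i) (hm j)
    have hnn : 0 ≤ m i * m j * (2 * ρ * Real.sin ((α i - α j) / 2)
            + r * (γ i - γ j) * Real.cos ((α i - α j) / 2)) ^ 2 := by positivity
    exact mul_nonpos_of_nonneg_of_nonpos hnn hg'.le
  have hT3terms : ∀ i ∈ (univ : Finset (Fin n)), ∀ j ∈ univ.erase i,
      0 ≤ m i * m j * (γ i - γ j) ^ 2 * r *
          Real.sin (|α i - α j| / 2) * g (2 * r * Real.sin (|α i - α j| / 2)) := by
    intro i _ j hj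
    have hij : j ≠ i := Finset.ne_of_mem_erase hj
    have hs := hsin i j (Ne.symm hij)
    have harg : 0 < 2 * r * Real.sin (|α i - α j| / 2) := by nlinarith
    have hg := hgpos _ harg
    have hmm : 0 < m i * m j := mul_pos (hm i) (hm j)
    have := sq_nonneg (γ i - γ j)
    positivity
  have hT3 : 0 ≤ T3 :=
    Finset.sum_nonneg fun i hi => Finset.sum_nonneg fun j hj => hT3terms i hi j hj
  rw [hQ]
  refine ⟨by linarith, ?_, ?_⟩
  · intro hQ0
    have hT1z : -2 * ρ ^ 2 * A ^ 2 * ∑ i, m i = 0 := by linarith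
    have hρ : ρ = 0 := by
      have h : ρ ^ 2 * (A ^ 2 * ∑ i, m i) = 0 := by linear_combination (-1/2 : ℝ) * hT1z
      have hAS : 0 < A ^ 2 * ∑ i, m i := by positivity
      rcases mul_eq_zero.mp h with h' | h'
      · exact pow_eq_zero_iff (by norm_num) |>.mp h'
      · exact absurd h' hAS.ne' 
    refine ⟨hρ, ?_⟩
    have hT3z : T3 = 0 := by linarith
    have hinner := (Finset.sum_eq_zero_iff_of_nonneg
      (fun i hi => Finset.sum_nonneg fun j hj => hT3terms i hi j hj)).mp hT3z
    intro i j
    rcases eq_or_ne i j with h | h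
    · rw [h]
    · have hj : j ∈ univ.erase i := Finset.mem_erase.mpr ⟨Ne.symm h, mem_univ j⟩
      have hterm := (Finset.sum_eq_zero_iff_of_nonneg
        (fun j hj => hT3terms i (mem_univ i) j hj)).mp (hinner i (mem_univ i)) j hj
      have hij : j ≠ i := Ne.symm h
      have hs := hsin i j h
      have harg : 0 < 2 * r * Real.sin (|α i - α j| / 2) := by nlinarith
      have hg := hgpos _ harg
      have hmm : 0 < m i * m j := mul_pos (hm i) (hm j)
      have hsq : (γ i - γ j) ^ 2 = 0 := by
        by_contra hne'
        have hsq' : 0 < (γ i - γ j) ^ 2 := lt_of_le_of_ne (sq_nonneg _) (Ne.symm hne')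
        have hpos : 0 < m i * m j * (γ i - γ j) ^ 2 * r *
            Real.sin (|α i - α j| / 2) * g (2 * r * Real.sin (|α i - α j| / 2)) :=
          mul_pos (mul_pos (mul_pos (mul_pos hmm hsq') hr) hs) hg
        linarith
      have := pow_eq_zero_iff (n := 2) (by norm_num) |>.mp hsq
      linarith
  · rintro ⟨hρ, hγ⟩
    have h2z : T2 = 0 := by
      apply Finset.sum_eq_zero
      intro i _
      apply Finset.sum_eq_zero
      intro j _
      rw [hρ, hγ i j]
      ring
    have h3z : T3 = 0 := by
      apply Finset.sum_eq_zero
      intro i _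
      apply Finset.sum_eq_zero
      intro j _
      rw [hγ i j]
      ring
    rw [← hT2def, ← hT3def, hρ, h2z, h3z]
    ring
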